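/- Boundedness of φ_k on matrices with nonpositive logarithmic norm: if A ∈ ℝ^{N×N} satisfies ⟨Aw, w⟩ ≤ 0 for all w ∈ ℝ^N, then for every k ≥ 1 the operator norm of φ_k(A) satisfies ‖φ_k(A)‖ ≤ 1/k!. -/

import Mathlib

set_option maxHeartbeats 1000000

open Matrix
open NormedSpace  -- for `exp`
open scoped Matrix.Norms.L2Operator  -- the L2 operator norm on matrices

/-- The matrix φ-functions for `k ≥ 1`:
`φ_k(A) = ∫₀¹ e^{(1-s)A} s^{k-1}/(k-1)! ds`. -/
noncomputable def phiMatrix {N : ℕ} (k : ℕ) (A : Matrix (Fin N) (Fin N) ℝ) :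
    Matrix (Fin N) (Fin N) ℝ :=
  ∫ s in (0:ℝ)..1, (s ^ (k - 1) / (Nat.factorial (k - 1))) • exp ((1 - s) • A)

/-- `M ↦ M.mulVec w` as a continuous linear map into Euclidean space. -/
noncomputable def mulVecCLM {N : ℕ} (w : Fin N → ℝ) :
    Matrix (Fin N) (Fin N) ℝ →L[ℝ] EuclideanSpace ℝ (Fin N) :=
  LinearMap.toContinuousLinearMap
    { toFun := fun M => (WithLp.equiv 2 _).symm (M.mulVec w)
      map_add' := by intro M₁ M₂; ext i; simp [Matrix.add_mulVec]
      map_smul' := by intro c M; ext i; simp [Matrix.smul_mulVec] }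

lemma mulVecCLM_apply {N : ℕ} (w : Fin N → ℝ) (M : Matrix (Fin N) (Fin N) ℝ) :
    mulVecCLM w M = (WithLp.equiv 2 _).symm (M.mulVec w) := rfl

lemma norm_exp_le_one_of_dissipative
    {N : ℕ} (A : Matrix (Fin N) (Fin N) ℝ)
    (hA : ∀ w : Fin N → ℝ, A.mulVec w ⬝ᵥ w ≤ 0)
    {t : ℝ} (ht : 0 ≤ t) : ‖exp (t • A)‖ ≤ 1 := by
  rw [Matrix.l2_opNorm_def]
  apply ContinuousLinearMap.opNorm_le_bound _ zero_le_one
  intro x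
  rw [one_mul]
  -- `u s = exp (s • A) * x` as a Euclidean vector
  set u : ℝ → EuclideanSpace ℝ (Fin N) := fun s => mulVecCLM x (exp (s • A)) with hu
  have hderiv : ∀ s : ℝ, HasDerivAt u (mulVecCLM x (A * exp (s • A))) s := by
    intro s
    exact ((mulVecCLM x).hasFDerivAt.comp_hasDerivAt s
      (hasDerivAt_exp_smul_const' A s))
  -- `g s = ‖u s‖²`
  set g : ℝ → ℝ := fun s => inner ℝ (u s) (u s) with hg
  have hgderiv : ∀ s : ℝ, HasDerivAt g
      (inner ℝ (u s) (mulVecCLM x (A * exp (s • A)))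
        + inner ℝ (mulVecCLM x (A * exp (s • A))) (u s)) s := by
    intro s
    exact (hderiv s).inner ℝ (hderiv s)
  have hinner_dot : ∀ (a b : EuclideanSpace ℝ (Fin N)),
      (inner ℝ a b : ℝ) = (a : Fin N → ℝ) ⬝ᵥ (b : Fin N → ℝ) := by
    intro a b
    simp [PiLp.inner_apply, dotProduct, RCLike.inner_apply, mul_comm]
  have hanti : Antitone g := by
    apply antitone_of_hasDerivAt_nonpos hgderiv
    intro s
    have hv : (mulVecCLM x (A * exp (s • A)) : Fin N → ℝ)
        = A.mulVec ((exp (s • A)).mulVec x) := by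
      show (A * exp (s • A)).mulVec x = _
      exact (Matrix.mulVec_mulVec ..).symm
    have husv : (u s : Fin N → ℝ) = (exp (s • A)).mulVec x := rfl
    have h1 : (inner ℝ (mulVecCLM x (A * exp (s • A))) (u s) : ℝ) ≤ 0 := by
      rw [hinner_dot, hv, husv]
      exact hA _
    have h2 : (inner ℝ (u s) (mulVecCLM x (A * exp (s • A))) : ℝ) ≤ 0 := by
      rw [real_inner_comm]; exact h1
    simpa using add_nonpos h2 h1
  have hmono : g t ≤ g 0 := hanti ht
  have hu0 : u 0 = x := by
    ext i
    simp [hu, mulVecCLM_apply, Matrix.one_mulVec]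
  have hg0 : g 0 = ‖x‖ ^ 2 := by
    rw [hg]; simp only [hu0]; exact real_inner_self_eq_norm_sq _
  have hgt : g t = ‖u t‖ ^ 2 := real_inner_self_eq_norm_sq _
  have hsq : ‖u t‖ ^ 2 ≤ ‖x‖ ^ 2 := by rw [← hgt, ← hg0]; exact hmono
  have hnorm : ‖u t‖ ≤ ‖x‖ := by
    have := Real.sqrt_le_sqrt hsq
    rwa [Real.sqrt_sq (norm_nonneg _), Real.sqrt_sq (norm_nonneg _)] at this
  exact hnorm

theorem phiMatrix_norm_le_of_dissipative
    {N : ℕ} (A : Matrix (Fin N) (Fin N) ℝ)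
    (hA : ∀ w : Fin N → ℝ, A.mulVec w ⬝ᵥ w ≤ 0)
    (k : ℕ) (hk : 1 ≤ k) :
    ‖phiMatrix k A‖ ≤ 1 / (Nat.factorial k) := by
  obtain ⟨m, rfl⟩ : ∃ m, k = m + 1 := ⟨k - 1, (Nat.succ_pred_eq_of_pos hk).symm⟩
  have hfac : ((m + 1).factorial : ℝ) = (m + 1) * m.factorial := by
    rw [Nat.factorial_succ]; push_cast; ring
  rw [phiMatrix]
  have hle : ‖∫ s in (0:ℝ)..1,
      (s ^ (m + 1 - 1) / (Nat.factorial (m + 1 - 1))) • exp ((1 - s) • A)‖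
      ≤ |∫ s in (0:ℝ)..1, s ^ m / (Nat.factorial m)| := by
    apply intervalIntegral.norm_integral_le_abs_of_norm_le
    · filter_upwards [MeasureTheory.ae_restrict_mem measurableSet_Ioc] with s hs
      rw [Set.uIoc_of_le zero_le_one] at hs
      have hs0 : 0 ≤ s := le_of_lt hs.1
      have hs1 : s ≤ 1 := hs.2
      rw [norm_smul]
      have hexp : ‖exp ((1 - s) • A)‖ ≤ 1 :=
        norm_exp_le_one_of_dissipative A hA (by linarith)
      have hc : ‖s ^ (m + 1 - 1) / (Nat.factorial (m + 1 - 1) : ℝ)‖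
          = s ^ m / (Nat.factorial m) := by
        simp only [Nat.add_sub_cancel]
        rw [Real.norm_eq_abs, abs_of_nonneg]
        positivity
      calc ‖s ^ (m + 1 - 1) / (Nat.factorial (m + 1 - 1) : ℝ)‖ * ‖exp ((1 - s) • A)‖
          ≤ ‖s ^ (m + 1 - 1) / (Nat.factorial (m + 1 - 1) : ℝ)‖ * 1 :=
            mul_le_mul_of_nonneg_left hexp (norm_nonneg _)
        _ = s ^ m / (Nat.factorial m) := by rw [mul_one, hc]
    · apply IntervalIntegrable.div_const
      exact (intervalIntegral.intervalIntegrable_pow m)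
  refine hle.trans ?_
  have : ∫ s in (0:ℝ)..1, s ^ m / (Nat.factorial m) = 1 / (Nat.factorial (m + 1)) := by
    rw [intervalIntegral.integral_div, integral_pow]
    rw [hfac]
    field_simp
    simp
  rw [this, abs_of_nonneg (by positivity)]
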